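/- arXiv:1907.08581 — 4 statements merged into one kernel-verified Lean document; each statement's English description precedes it below -/
import Mathlib

section
/- Suppose λ is a singular cardinal and f⃗ = ⟨f_γ | γ < λ⁺⟩ is a scale for λ in a product ∏_{i<cf(λ)} λ_i. Suppose ⟨S_i | i < cf(λ)⟩ is a partition of λ⁺ such that T := E^{λ⁺}_{>cf(λ)} ∩ ⋂_{i<cf(λ)} Tr(S_i) is stationary. Define g_γ(i) := 0 if γ ∈ S_i, and g_γ(i) := f_γ(i) otherwise. Then g⃗ = ⟨g_γ | γ < λ⁺⟩ is a scale for λ, and g⃗ is not very good at any point of T; in particular, g⃗ is not a very good scale. -/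
open Cardinal Set Ordinal

/-- `C` is unbounded in `α`. -/
def UnbIn (C : Set Ordinal) (α : Ordinal) : Prop :=
  ∀ β < α, ∃ γ ∈ C, β < γ ∧ γ < α

/-- `C` is closed in `α`: every nonzero limit point of `C` below `α` belongs to `C`. -/
def ClosedIn (C : Set Ordinal) (α : Ordinal) : Prop :=
  ∀ β < α, 0 < β → UnbIn C β → β ∈ C

/-- `C` is a club (closed unbounded) subset of `α`. -/
def ClubIn (C : Set Ordinal) (α : Ordinal) : Prop :=
  C ⊆ Set.Iio α ∧ ClosedIn C α ∧ UnbIn C α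

/-- `S` is stationary in `α`. -/
def StatIn (S : Set Ordinal) (α : Ordinal) : Prop :=
  ∀ C, ClubIn C α → (S ∩ C).Nonempty

/-- The trace of `S` below `κ`: ordinals of uncountable cofinality in which `S` reflects. -/
def Tr (κ : Ordinal) (S : Set Ordinal) : Set Ordinal :=
  {β | β < κ ∧ Cardinal.aleph0 < β.cof ∧ StatIn (S ∩ Set.Iio β) β}

/-- `E^κ_θ`, the set of ordinals below `κ` of cofinality `θ`. -/
def Ecof (κ : Ordinal) (θ : Cardinal) : Set Ordinal :=
  {α | α < κ ∧ α.cof = θ}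

/-- The set of accumulation points of `C` that belong to `C`. -/
def accSet (C : Set Ordinal) : Set Ordinal :=
  {β ∈ C | 0 < β ∧ UnbIn C β}

/-- The order type of a set of ordinals: the unique ordinal whose initial segment
order-embeds onto the set. -/
noncomputable def otp (x : Set Ordinal) : Ordinal :=
  sInf {o : Ordinal | ∃ f : Ordinal → Ordinal,
    StrictMonoOn f (Set.Iio o) ∧ f '' Set.Iio o = x}

/-- The partition principle `Prt(S, θ, T)` (computed inside `κ`). -/
def Prt (κ : Ordinal) (S : Set Ordinal) (θ : Cardinal) (T : Set Ordinal) : Prop :=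
  ∃ P : Ordinal → Set Ordinal,
    (∀ i < θ.ord, P i ⊆ S) ∧
    Set.PairwiseDisjoint (Set.Iio θ.ord) P ∧
    (S ⊆ ⋃ i ∈ Set.Iio θ.ord, P i) ∧
    StatIn (T ∩ ⋂ i ∈ Set.Iio θ.ord, Tr κ (P i)) κ

/-- The principle `SNR⁻(κ, ν, T)`. -/
def SNRm (κ : Ordinal) (ν : Cardinal) (T : Set Ordinal) : Prop :=
  ∀ T₀ ⊆ T ∩ Ecof κ ν, StatIn T₀ κ →
    ∃ φ : Ordinal → Ordinal, (∀ β < κ, φ β < ν.ord) ∧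
      StatIn {α ∈ T₀ | ∃ c, ClubIn c α ∧ StrictMonoOn φ c} κ

/-- The simultaneous partition principle `Prp(S, ν, T)` (computed inside `κ`). -/
def Prp (κ : Ordinal) (S : Set Ordinal) (ν : Cardinal) (T : Set Ordinal) : Prop :=
  ∀ θ : Cardinal, θ ≤ ν →
    ∀ Si : Ordinal → Set Ordinal, (∀ i < θ.ord, Si i ⊆ S) →
      ∀ T' ⊆ T ∩ ⋂ i ∈ Set.Iio θ.ord, Tr κ (Si i), StatIn T' κ →
        ∃ I : Set Ordinal, I ⊆ Set.Iio θ.ord ∧ (∀ j < θ.ord, ∃ i ∈ I, j ≤ i) ∧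
          ∃ S' : Ordinal → Set Ordinal,
            (∀ i ∈ I, S' i ⊆ Si i) ∧
            (∀ i ∈ I, StatIn (S' i) κ) ∧
            Set.PairwiseDisjoint I S' ∧
            StatIn (T' ∩ ⋂ i ∈ I, Tr κ (S' i)) κ

/-- `⟨lams, f⟩` is a scale for the singular cardinal `lam`. -/
def IsScale (lam : Cardinal) (lams : Ordinal → Cardinal) (f : Ordinal → Ordinal → Ordinal) : Prop :=
  (∀ i < lam.ord.cof.ord, (lams i).IsRegular) ∧
  (∀ i < lam.ord.cof.ord, ∀ j < lam.ord.cof.ord, i < j → lams i < lams j) ∧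
  (∀ i < lam.ord.cof.ord, lams i < lam) ∧
  (∀ c < lam, ∃ i < lam.ord.cof.ord, c < lams i) ∧
  (∀ γ < (Order.succ lam).ord, ∀ i < lam.ord.cof.ord, f γ i < (lams i).ord) ∧
  (∀ γ < (Order.succ lam).ord, ∀ δ < (Order.succ lam).ord, γ < δ →
    ∃ i < lam.ord.cof.ord, ∀ j, i ≤ j → j < lam.ord.cof.ord → f γ j < f δ j) ∧
  (∀ g : Ordinal → Ordinal, (∀ i < lam.ord.cof.ord, g i < (lams i).ord) →
    ∃ γ < (Order.succ lam).ord, ∃ i < lam.ord.cof.ord,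
      ∀ j, i ≤ j → j < lam.ord.cof.ord → g j < f γ j)

/-- `α` is a very good point of the scale `f`. -/
def VeryGoodAt (lam : Cardinal) (f : Ordinal → Ordinal → Ordinal) (α : Ordinal) : Prop :=
  ∃ C, ClubIn C α ∧ ∃ i < lam.ord.cof.ord,
    ∀ γ ∈ C, ∀ δ ∈ C, γ < δ → ∀ j, i ≤ j → j < lam.ord.cof.ord → f γ j < f δ j

/-- The least size of a family of `θ`-sized subsets of `ν` such that every club
in `ν` contains a member of the family. -/
noncomputable def CC (ν θ : Cardinal) : Cardinal :=
  sInf { c : Cardinal | ∃ 𝒞 : Ordinal → Set Ordinal,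
    (∀ i < c.ord, 𝒞 i ⊆ Set.Iio ν.ord ∧ (otp (𝒞 i)).card = θ) ∧
    ∀ b, ClubIn b ν.ord → ∃ i < c.ord, 𝒞 i ⊆ b }

/-- `𝒟(ν, μ) = cf([ν]^μ, ⊇)`: the least size of a family of `μ`-sized subsets of `ν`
such that every `μ`-sized subset of `ν` contains a member of the family. -/
noncomputable def DD (ν μ : Cardinal) : Cardinal :=
  sInf { c : Cardinal | ∃ 𝒟 : Ordinal → Set Ordinal,
    (∀ i < c.ord, 𝒟 i ⊆ Set.Iio ν.ord ∧ (otp (𝒟 i)).card = μ) ∧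
    ∀ a : Set Ordinal, a ⊆ Set.Iio ν.ord → (otp a).card = μ → ∃ i < c.ord, 𝒟 i ⊆ a }

theorem statement12 (lam : Cardinal) (hlam : Cardinal.aleph0 ≤ lam) (hsing : ¬lam.IsRegular)
    (lams : Ordinal → Cardinal) (f : Ordinal → Ordinal → Ordinal)
    (hscale : IsScale lam lams f)
    (P : Ordinal → Set Ordinal)
    (hPsub : ∀ i < lam.ord.cof.ord, P i ⊆ Set.Iio (Order.succ lam).ord)
    (hPdisj : Set.PairwiseDisjoint (Set.Iio lam.ord.cof.ord) P)
    (hPcover : Set.Iio (Order.succ lam).ord ⊆ ⋃ i ∈ Set.Iio lam.ord.cof.ord, P i)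
    (hT : StatIn ({α | α < (Order.succ lam).ord ∧ lam.ord.cof < α.cof} ∩
      ⋂ i ∈ Set.Iio lam.ord.cof.ord, Tr (Order.succ lam).ord (P i)) (Order.succ lam).ord)
    (g : Ordinal → Ordinal → Ordinal)
    (hg : ∀ γ i, (γ ∈ P i → g γ i = 0) ∧ (γ ∉ P i → g γ i = f γ i)) :
    IsScale lam lams g ∧
    (∀ α ∈ {α | α < (Order.succ lam).ord ∧ lam.ord.cof < α.cof} ∩
        ⋂ i ∈ Set.Iio lam.ord.cof.ord, Tr (Order.succ lam).ord (P i),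
      ¬ VeryGoodAt lam g α) ∧
    ¬ ∃ D, ClubIn D (Order.succ lam).ord ∧
        ∀ α ∈ D, α.cof ≠ lam.ord.cof → VeryGoodAt lam g α := by
  -- basic limit facts
  have hϑlim : Order.IsSuccLimit (lam.ord.cof.ord) :=
    Cardinal.isSuccLimit_ord (Ordinal.aleph0_le_cof.mpr (Cardinal.isSuccLimit_ord hlam))
  have hκlim : Order.IsSuccLimit ((Order.succ lam).ord) :=
    Cardinal.isSuccLimit_ord (hlam.trans (le_of_lt (Order.lt_succ lam)))
  obtain ⟨h1, h2, h3, h4, h5, h6, h7⟩ := hscale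
  have hgle : ∀ γ i, g γ i ≤ f γ i := by
    intro γ i
    by_cases h : γ ∈ P i
    · rw [(hg γ i).1 h]; exact zero_le
    · rw [(hg γ i).2 h]
  have hmem : ∀ γ < (Order.succ lam).ord, ∃ j < lam.ord.cof.ord, γ ∈ P j := by
    intro γ hγ
    have := hPcover hγ
    simpa using this
  have hnot : ∀ j₀ < lam.ord.cof.ord, ∀ j < lam.ord.cof.ord, ∀ γ, γ ∈ P j₀ → j₀ ≠ j →
      γ ∉ P j := by
    intro j₀ hj₀ j hj γ hγ hne hγ'
    exact Set.disjoint_left.mp (hPdisj hj₀ hj hne) hγ hγ'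
  -- key: eventual equality with f and increase
  have key : ∀ γ < (Order.succ lam).ord, ∀ δ < (Order.succ lam).ord, γ < δ →
      ∃ i < lam.ord.cof.ord, ∀ j, i ≤ j → j < lam.ord.cof.ord → g γ j < g δ j := by
    intro γ hγ δ hδ hγδ
    obtain ⟨i₀, hi₀, hdom⟩ := h6 γ hγ δ hδ hγδ
    obtain ⟨j₀, hj₀, hδP⟩ := hmem δ hδ
    refine ⟨max i₀ (Order.succ j₀), max_lt hi₀ (hϑlim.succ_lt hj₀), ?_⟩
    intro j hij hj
    have hj₀j : j₀ < j := lt_of_lt_of_le (Order.lt_succ j₀) (le_trans (le_max_right _ _) hij)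
    have : δ ∉ P j := hnot j₀ hj₀ j hj δ hδP (ne_of_lt hj₀j)
    calc g γ j ≤ f γ j := hgle γ j
      _ < f δ j := hdom j (le_trans (le_max_left _ _) hij) hj
      _ = g δ j := ((hg δ j).2 this).symm
  have part2 : ∀ α ∈ {α | α < (Order.succ lam).ord ∧ lam.ord.cof < α.cof} ∩
        ⋂ i ∈ Set.Iio lam.ord.cof.ord, Tr (Order.succ lam).ord (P i),
      ¬ VeryGoodAt lam g α := by
    rintro α ⟨hα1, hα2⟩ ⟨C, hC, i, hi, hvg⟩
    have hTr : α ∈ Tr (Order.succ lam).ord (P i) := by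
      have := Set.mem_iInter₂.mp hα2 i hi
      exact this
    obtain ⟨-, -, hstat⟩ := hTr
    -- get γ ∈ P i ∩ C
    obtain ⟨γ, ⟨hγP, hγα⟩, hγC⟩ := hstat C hC
    -- the club C above γ
    have hα0 : γ < α := hγα
    have hC' : ClubIn (C ∩ Set.Ioi γ) α := by
      obtain ⟨hCsub, hCcl, hCunb⟩ := hC
      refine ⟨fun x hx => hCsub hx.1, ?_, ?_⟩
      · intro β hβ hβ0 hunb
        have hunbC : UnbIn C β := by
          intro x hx
          obtain ⟨y, hy, hxy, hyβ⟩ := hunb x hx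
          exact ⟨y, hy.1, hxy, hyβ⟩
        refine ⟨hCcl β hβ hβ0 hunbC, ?_⟩
        obtain ⟨y, hy, -, hyβ⟩ := hunb 0 hβ0
        exact lt_trans hy.2 hyβ
      · intro β hβ
        obtain ⟨y, hy, hxy, hyα⟩ := hCunb (max β γ) (max_lt hβ hα0)
        exact ⟨y, ⟨hy, lt_of_le_of_lt (le_max_right _ _) hxy⟩,
          lt_of_le_of_lt (le_max_left _ _) hxy, hyα⟩
    obtain ⟨δ, ⟨hδP, hδα⟩, hδC, hγδ⟩ := hstat _ hC'
    have := hvg γ hγC δ hδC hγδ i le_rfl hi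
    rw [(hg δ i).1 hδP] at this
    exact zero_le.not_gt this
  refine ⟨⟨h1, h2, h3, h4, ?_, key, ?_⟩, part2, ?_⟩
  · -- bounds
    intro γ hγ i hi
    refine lt_of_le_of_lt (hgle γ i) (h5 γ hγ i hi)
  · -- dominating
    intro h hbd
    obtain ⟨γ, hγ, i₀, hi₀, hdom⟩ := h7 h hbd
    have hδκ : Order.succ γ < (Order.succ lam).ord := hκlim.succ_lt hγ
    obtain ⟨i₁, hi₁, hdom'⟩ := h6 γ hγ (Order.succ γ) hδκ (Order.lt_succ γ)
    obtain ⟨j₀, hj₀, hδP⟩ := hmem (Order.succ γ) hδκ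
    refine ⟨Order.succ γ, hδκ, max (max i₀ i₁) (Order.succ j₀),
      max_lt (max_lt hi₀ hi₁) (hϑlim.succ_lt hj₀), ?_⟩
    intro j hij hj
    have hj₀j : j₀ < j := lt_of_lt_of_le (Order.lt_succ j₀) (le_trans (le_max_right _ _) hij)
    have hnp : Order.succ γ ∉ P j := hnot j₀ hj₀ j hj _ hδP (ne_of_lt hj₀j)
    calc h j < f γ j := hdom j (le_trans (le_trans (le_max_left _ _) (le_max_left _ _)) hij) hj
      _ < f (Order.succ γ) j :=
          hdom' j (le_trans (le_trans (le_max_right _ _) (le_max_left _ _)) hij) hj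
      _ = g (Order.succ γ) j := ((hg _ j).2 hnp).symm
  · rintro ⟨D, hD, hvg⟩
    obtain ⟨α, hαT, hαD⟩ := hT D hD
    exact part2 α hαT (hvg α hαD (ne_of_gt hαT.1.2))
end

section
/- Suppose λ is a singular cardinal, f⃗ = ⟨f_β | β < λ⁺⟩ is a scale for λ, and ν ∈ reg(λ) \ {ℵ₀, cf(λ)}. Then SNR⁻(λ⁺, ν, E^{λ⁺}_ν ∩ V(f⃗)) holds: for every stationary T₀ ⊆ E^{λ⁺}_ν ∩ V(f⃗), there exists φ : λ⁺ → ν such that for stationarily many α ∈ T₀ there is a club in α on which φ is strictly increasing. -/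
open Cardinal Set Ordinal

section Aux13

theorem unbIn_mono13 {C C' : Set Ordinal} {α : Ordinal} (h : C ⊆ C') (hC : UnbIn C α) :
    UnbIn C' α := fun β hβ => by
  obtain ⟨γ, hγ, h1, h2⟩ := hC β hβ
  exact ⟨γ, h hγ, h1, h2⟩

theorem statIn_mono13 {S S' : Set Ordinal} {κ : Ordinal} (h : S ⊆ S') (hS : StatIn S κ) :
    StatIn S' κ := fun C hC => by
  obtain ⟨x, hx1, hx2⟩ := hS C hC
  exact ⟨x, h hx1, hx2⟩

theorem clubIn_Iio13 {κ : Ordinal} (hκ : Order.IsSuccLimit κ) : ClubIn (Set.Iio κ) κ :=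
  ⟨subset_rfl, fun β hβ _ _ => hβ,
    fun β hβ => ⟨Order.succ β, hκ.succ_lt hβ, Order.lt_succ β, hκ.succ_lt hβ⟩⟩

theorem chain13 {α : Ordinal} (hℵ : Cardinal.aleph0 < α.cof) {Q : Ordinal → Ordinal → Prop}
    (step : ∀ δ < α, ∃ δ', δ < δ' ∧ δ' < α ∧ Q δ δ') :
    ∀ β < α, ∃ d, β < d ∧ d < α ∧
      ∀ x < d, ∃ δ δ', x < δ ∧ δ < δ' ∧ δ' < d ∧ Q δ δ' := by
  have hαlim : Order.IsSuccLimit α := Ordinal.aleph0_le_cof.mp hℵ.le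
  intro β hβ
  choose! st h1 h2 h3 using step
  let b : ℕ → Ordinal := fun n => Nat.rec (Order.succ β) (fun _ x => st x) n
  have hbs : ∀ n, b (n + 1) = st (b n) := fun n => rfl
  have hbκ : ∀ n, b n < α := by
    intro n
    induction n with
    | zero => exact hαlim.succ_lt hβ
    | succ n ih => rw [hbs]; exact h2 (b n) ih
  have hmono : ∀ n, b n < b (n + 1) := fun n => by rw [hbs]; exact h1 (b n) (hbκ n)
  have hbd : ∀ n, b n ≤ ⨆ m, b m := fun n => Ordinal.le_iSup b n
  refine ⟨⨆ m, b m, lt_of_lt_of_le (Order.lt_succ β) (hbd 0), ?_, ?_⟩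
  · apply Ordinal.iSup_lt_ord_lift ?_ hbκ
    simpa using hℵ
  · intro x hx
    obtain ⟨n, hn⟩ := Ordinal.lt_iSup_iff.mp hx
    refine ⟨b n, b (n + 1), hn, hmono n, lt_of_lt_of_le (hmono (n + 1)) (hbd (n + 2)), ?_⟩
    rw [hbs n]
    exact h3 (b n) (hbκ n)

theorem clubIn_iInter13 {κ o : Ordinal} {D : Ordinal → Set Ordinal}
    (ho : 0 < o) (hcard : o.card < κ.cof) (hℵ : Cardinal.aleph0 < κ.cof)
    (h : ∀ i < o, ClubIn (D i) κ) : ClubIn (⋂ i ∈ Set.Iio o, D i) κ := by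
  have hκlim : Order.IsSuccLimit κ := Ordinal.aleph0_le_cof.mp hℵ.le
  refine ⟨?_, ?_, ?_⟩
  · intro x hx
    exact (h 0 ho).1 (Set.mem_iInter₂.mp hx 0 ho)
  · intro β hβ h0 hu
    exact Set.mem_iInter₂.mpr fun i hi =>
      (h i hi).2.1 β hβ h0 (unbIn_mono13 (fun x hx => Set.mem_iInter₂.mp hx i hi) hu)
  · intro β hβ
    have step : ∀ δ < κ, ∃ δ', δ < δ' ∧ δ' < κ ∧ ∀ i < o, ∃ γ ∈ D i, δ < γ ∧ γ < δ' := by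
      intro δ hδ
      choose gg hg1 hg2 hg3 using fun i (hi : i < o) => (h i hi).2.2 δ hδ
      refine ⟨Order.succ (Ordinal.bsup o gg), ?_,
        hκlim.succ_lt (Ordinal.bsup_lt_ord hcard hg3), fun i hi =>
          ⟨gg i hi, hg1 i hi, hg2 i hi,
            lt_of_le_of_lt (Ordinal.le_bsup gg i hi) (Order.lt_succ _)⟩⟩
      exact lt_of_lt_of_le (hg2 0 ho) ((Ordinal.le_bsup gg 0 ho).trans (Order.le_succ _))
    obtain ⟨d, hβd, hdκ, hd⟩ := chain13 hℵ step β hβ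
    refine ⟨d, ?_, hβd, hdκ⟩
    refine Set.mem_iInter₂.mpr fun i hi =>
      (h i hi).2.1 d hdκ ((_root_.zero_le (a := β)).trans_lt hβd) ?_
    intro x hx
    obtain ⟨δ, δ', hxδ, hδδ', hδ'd, hQ⟩ := hd x hx
    obtain ⟨γ, hγ, hδγ, hγδ'⟩ := hQ i hi
    exact ⟨γ, hγ, hxδ.trans hδγ, hγδ'.trans hδ'd⟩

theorem clubIn_inter13 {α : Ordinal} {C D : Set Ordinal} (hℵ : Cardinal.aleph0 < α.cof)
    (hC : ClubIn C α) (hD : ClubIn D α) : ClubIn (C ∩ D) α := by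
  refine ⟨fun x hx => hC.1 hx.1, ?_, ?_⟩
  · intro β hβ h0 hu
    exact ⟨hC.2.1 β hβ h0 (unbIn_mono13 Set.inter_subset_left hu),
      hD.2.1 β hβ h0 (unbIn_mono13 Set.inter_subset_right hu)⟩
  · intro β hβ
    have step : ∀ δ < α, ∃ δ', δ < δ' ∧ δ' < α ∧ (δ' ∈ D ∧ ∃ γ ∈ C, δ < γ ∧ γ < δ') := by
      intro δ hδ
      obtain ⟨γ, hγC, hδγ, hγα⟩ := hC.2.2 δ hδ
      obtain ⟨δ', hδ'D, hγδ', hδ'α⟩ := hD.2.2 γ hγα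
      exact ⟨δ', hδγ.trans hγδ', hδ'α, hδ'D, γ, hγC, hδγ, hγδ'⟩
    obtain ⟨d, hβd, hdα, hd⟩ := chain13 hℵ step β hβ
    have h0d : (0 : Ordinal) < d := (_root_.zero_le (a := β)).trans_lt hβd
    refine ⟨d, ⟨?_, ?_⟩, hβd, hdα⟩
    · refine hC.2.1 d hdα h0d ?_
      intro x hx
      obtain ⟨δ, δ', hxδ, hδδ', hδ'd, hQD, γ, hγC, hδγ, hγδ'⟩ := hd x hx
      exact ⟨γ, hγC, hxδ.trans hδγ, hγδ'.trans hδ'd⟩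
    · refine hD.2.1 d hdα h0d ?_
      intro x hx
      obtain ⟨δ, δ', hxδ, hδδ', hδ'd, hQD, -⟩ := hd x hx
      exact ⟨δ', hQD, hxδ.trans hδδ', hδ'd⟩

theorem statSplit13 {κ o : Ordinal} {S : Set Ordinal} {A : Ordinal → Set Ordinal}
    (ho : 0 < o) (hcard : o.card < κ.cof) (hℵ : Cardinal.aleph0 < κ.cof)
    (hstat : StatIn S κ) (hcov : ∀ x ∈ S, ∃ i < o, x ∈ A i) :
    ∃ i < o, StatIn (S ∩ A i) κ := by
  by_contra hcon
  push_neg at hcon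
  have hclubs : ∀ i, i < o → ∃ Ci, ClubIn Ci κ ∧ (S ∩ A i) ∩ Ci = ∅ := by
    intro i hi
    have h2 := hcon i hi
    simp only [StatIn, not_forall, Classical.not_imp] at h2
    obtain ⟨Ci, hCi, hne⟩ := h2
    exact ⟨Ci, hCi, Set.not_nonempty_iff_eq_empty.mp hne⟩
  choose! Ci hCi hCine using hclubs
  obtain ⟨x, hxS, hx⟩ := hstat _ (clubIn_iInter13 ho hcard hℵ hCi)
  obtain ⟨i, hi, hxA⟩ := hcov x hxS
  have hmem : x ∈ (S ∩ A i) ∩ Ci i := ⟨⟨hxS, hxA⟩, Set.mem_iInter₂.mp hx i hi⟩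
  rw [hCine i hi] at hmem
  exact hmem

noncomputable def efun13 (α : Ordinal) : Ordinal → Ordinal := fun ξ =>
  if h : ξ < α.cof.ord then (Ordinal.exists_fundamental_sequence α).choose ξ h else 0

theorem efun13_lt {α ξ : Ordinal} (hξ : ξ < α.cof.ord) : efun13 α ξ < α := by
  simp only [efun13, dif_pos hξ]
  exact ((Ordinal.exists_fundamental_sequence α).choose_spec).lt hξ

theorem efun13_mono {α ξ ξ' : Ordinal} (h : ξ ≤ ξ') (hξ' : ξ' < α.cof.ord) :
    efun13 α ξ ≤ efun13 α ξ' := by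
  have hξ : ξ < α.cof.ord := lt_of_le_of_lt h hξ'
  simp only [efun13, dif_pos hξ, dif_pos hξ']
  exact ((Ordinal.exists_fundamental_sequence α).choose_spec).monotone hξ hξ' h

theorem efun13_cof {α x : Ordinal} (hx : x < α) :
    ∃ ξ, ∃ _ : ξ < α.cof.ord, x ≤ efun13 α ξ := by
  have hb := ((Ordinal.exists_fundamental_sequence α).choose_spec).blsub_eq
  rw [← hb] at hx
  obtain ⟨i, hi, hle⟩ := Ordinal.lt_blsub_iff.mp hx
  refine ⟨i, hi, ?_⟩
  simpa only [efun13, dif_pos hi] using hle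

noncomputable def cpick13 (C : Set Ordinal) (α : Ordinal) (ξ : Ordinal) : Ordinal :=
  sInf {x | x ∈ C ∧ efun13 α ξ < x}

theorem cpick13_ne {C : Set Ordinal} {α ξ : Ordinal} (hC : ClubIn C α) (hξ : ξ < α.cof.ord) :
    {x | x ∈ C ∧ efun13 α ξ < x}.Nonempty := by
  obtain ⟨γ, hγ, h1, h2⟩ := hC.2.2 (efun13 α ξ) (efun13_lt hξ)
  exact ⟨γ, hγ, h1⟩

theorem cpick13_mem {C : Set Ordinal} {α ξ : Ordinal} (hC : ClubIn C α) (hξ : ξ < α.cof.ord) :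
    cpick13 C α ξ ∈ C ∧ efun13 α ξ < cpick13 C α ξ :=
  csInf_mem (cpick13_ne hC hξ)

theorem cpick13_mono {C : Set Ordinal} {α ξ ξ' : Ordinal} (hC : ClubIn C α) (h : ξ ≤ ξ')
    (hξ' : ξ' < α.cof.ord) : cpick13 C α ξ ≤ cpick13 C α ξ' := by
  apply csInf_le_csInf (OrderBot.bddBelow _) (cpick13_ne hC hξ')
  intro x hx
  exact ⟨hx.1, lt_of_le_of_lt (efun13_mono h hξ') hx.2⟩

theorem cpick13_cof {C : Set Ordinal} {α x : Ordinal} (hC : ClubIn C α) (hx : x < α) :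
    ∃ ξ, ∃ _ : ξ < α.cof.ord, x < cpick13 C α ξ := by
  obtain ⟨ξ, hξ, hle⟩ := efun13_cof hx
  exact ⟨ξ, hξ, lt_of_le_of_lt hle (cpick13_mem hC hξ).2⟩

end Aux13

theorem statement13 (lam : Cardinal) (hlam : Cardinal.aleph0 ≤ lam) (hsing : ¬lam.IsRegular)
    (lams : Ordinal → Cardinal) (f : Ordinal → Ordinal → Ordinal)
    (hscale : IsScale lam lams f)
    (ν : Cardinal) (hν : ν.IsRegular) (hνu : Cardinal.aleph0 < ν)
    (hνlam : ν < lam) (hνcf : ν ≠ lam.ord.cof) :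
    SNRm (Order.succ lam).ord ν
      (Ecof (Order.succ lam).ord ν ∩
        {α | α < (Order.succ lam).ord ∧ α.cof ≠ lam.ord.cof ∧ VeryGoodAt lam f α}) := by
  intro T₀ hT₀ hstat
  obtain ⟨hreg, hmono, hltlam, hcofseq, hbd, hincr, hdom⟩ := hscale
  have hsucc := Cardinal.isRegular_succ hlam
  have hκcof : (Order.succ lam).ord.cof = Order.succ lam := hsucc.cof_eq
  have hℵκ : Cardinal.aleph0 < (Order.succ lam).ord.cof := by
    rw [hκcof]; exact lt_of_le_of_lt hlam (Order.lt_succ lam)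
  have hκlim : Order.IsSuccLimit ((Order.succ lam).ord) :=
    Cardinal.isSuccLimit_ord (hlam.trans (Order.le_succ lam))
  have hmemT₀ : ∀ α ∈ T₀, α < (Order.succ lam).ord ∧ α.cof = ν ∧ VeryGoodAt lam f α := by
    intro α hα
    obtain ⟨⟨⟨h1, h2⟩, h3⟩, -⟩ := hT₀ hα
    exact ⟨h1, h2, h3.2.2⟩
  have hν0 : (0 : Ordinal) < ν.ord := by
    rw [← Cardinal.ord_zero]
    exact Cardinal.ord_lt_ord.mpr (lt_of_lt_of_le Cardinal.aleph0_pos hν.aleph0_le)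
  have hcoford : ∀ α ∈ T₀, α.cof.ord = ν.ord := fun α hα => by rw [(hmemT₀ α hα).2.1]
  have hvgall : ∀ α : Ordinal, α ∈ T₀ → ∃ C, ClubIn C α ∧ ∃ i, i < lam.ord.cof.ord ∧
      ∀ γ ∈ C, ∀ δ ∈ C, γ < δ → ∀ j, i ≤ j → j < lam.ord.cof.ord → f γ j < f δ j :=
    fun α hα => (hmemT₀ α hα).2.2
  choose! Cf hCf ifn hifnlt hvg using hvgall
  obtain ⟨i₀, hi₀lt, hi₀⟩ := hcofseq ν hνlam
  -- first pigeonhole: fix the very-goodness index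
  have hcard1 : (lam.ord.cof.ord).card < (Order.succ lam).ord.cof := by
    rw [hκcof, Cardinal.card_ord]
    exact lt_of_le_of_lt ((Ordinal.cof_le_card lam.ord).trans_eq (Cardinal.card_ord lam))
      (Order.lt_succ lam)
  have hcov1 : ∀ x ∈ T₀, ∃ i < lam.ord.cof.ord, x ∈ {α : Ordinal | max (ifn α) i₀ = i} :=
    fun x hx => ⟨max (ifn x) i₀, max_lt (hifnlt x hx) hi₀lt, rfl⟩
  obtain ⟨jst, hjlt, hstat1⟩ :=
    statSplit13 ((_root_.zero_le (a := i₀)).trans_lt hi₀lt) hcard1 hℵκ hstat hcov1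
  have hT₁fact : ∀ α ∈ T₀ ∩ {α : Ordinal | max (ifn α) i₀ = jst},
      ifn α ≤ jst ∧ i₀ ≤ jst := by
    intro α hα
    have h2 : max (ifn α) i₀ = jst := hα.2
    exact ⟨h2 ▸ le_max_left (ifn α) i₀, h2 ▸ le_max_right (ifn α) i₀⟩
  obtain ⟨α₁, hα₁, -⟩ := hstat1 _ (clubIn_Iio13 hκlim)
  have hνjst : ν < lams jst := by
    rcases eq_or_lt_of_le (hT₁fact α₁ hα₁).2 with h | h
    · rw [← h]; exact hi₀
    · exact hi₀.trans (hmono i₀ hi₀lt jst hjlt h)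
  -- monotonicity of the jst-th coordinate on the very good clubs
  have hgmono : ∀ α ∈ T₀ ∩ {α : Ordinal | max (ifn α) i₀ = jst}, ∀ γ ∈ Cf α, ∀ δ ∈ Cf α,
      γ < δ → f γ jst < f δ jst := by
    intro α hα γ hγ δ hδ hlt2
    exact hvg α hα.1 γ hγ δ hδ hlt2 jst (hT₁fact α hα).1 hjlt
  have hgZ : ∀ α ∈ T₀ ∩ {α : Ordinal | max (ifn α) i₀ = jst}, ∀ γ ∈ Cf α,
      f γ jst < Ordinal.bsup ν.ord (fun ξ _ => f (cpick13 (Cf α) α ξ) jst) := by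
    intro α hα γ hγ
    have hclub := hCf α hα.1
    obtain ⟨ξ, hξ, hlt2⟩ := cpick13_cof hclub (hclub.1 hγ)
    have hξν : ξ < ν.ord := by rw [← hcoford α hα.1]; exact hξ
    exact lt_of_lt_of_le (hgmono α hα γ hγ _ (cpick13_mem hclub hξ).1 hlt2)
      (Ordinal.le_bsup _ ξ hξν)
  have hZlt : ∀ α ∈ T₀ ∩ {α : Ordinal | max (ifn α) i₀ = jst},
      Ordinal.bsup ν.ord (fun ξ _ => f (cpick13 (Cf α) α ξ) jst) < (lams jst).ord := by
    intro α hα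
    apply Ordinal.bsup_lt_ord
    · rw [Cardinal.card_ord, (hreg jst hjlt).cof_eq]; exact hνjst
    · intro ξ hξ
      have hclub := hCf α hα.1
      have hξ' : ξ < α.cof.ord := by rw [hcoford α hα.1]; exact hξ
      exact hbd _ (lt_trans (hclub.1 (cpick13_mem hclub hξ').1) (hmemT₀ α hα.1).1) jst hjlt
  -- second pigeonhole: fix the supremum of the jst-th coordinates
  have hord0 : (0 : Ordinal) < (lams jst).ord := by
    rw [← Cardinal.ord_zero]
    exact Cardinal.ord_lt_ord.mpr (lt_of_lt_of_le Cardinal.aleph0_pos (hreg jst hjlt).aleph0_le)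
  have hcard2 : ((lams jst).ord).card < (Order.succ lam).ord.cof := by
    rw [hκcof, Cardinal.card_ord]
    exact lt_trans (hltlam jst hjlt) (Order.lt_succ lam)
  have hcov2 : ∀ x ∈ T₀ ∩ {α : Ordinal | max (ifn α) i₀ = jst}, ∃ i < (lams jst).ord,
      x ∈ {α : Ordinal | Ordinal.bsup ν.ord (fun ξ _ => f (cpick13 (Cf α) α ξ) jst) = i} :=
    fun x hx => ⟨_, hZlt x hx, rfl⟩
  obtain ⟨zst, hzstlt, hstat2⟩ := statSplit13 hord0 hcard2 hℵκ hstat1 hcov2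
  -- a witness point, from which we extract the uniform cofinal sequence
  obtain ⟨αs, hαsT₂, -⟩ := hstat2 _ (clubIn_Iio13 hκlim)
  set z : Ordinal → Ordinal := fun ξ => f (cpick13 (Cf αs) αs ξ) jst with hzdef
  set ψ : Ordinal → Ordinal := fun x => sInf {ξ | ξ < ν.ord ∧ x < z ξ} with hψdef
  have hζs : Ordinal.bsup ν.ord (fun ξ _ => f (cpick13 (Cf αs) αs ξ) jst) = zst := hαsT₂.2
  have hzlt : ∀ ξ, ξ < ν.ord → z ξ < zst := by
    intro ξ hξ
    have hclub := hCf αs hαsT₂.1.1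
    have hξ' : ξ < αs.cof.ord := by rw [hcoford αs hαsT₂.1.1]; exact hξ
    have h2 := hgZ αs hαsT₂.1 _ (cpick13_mem hclub hξ').1
    rw [hζs] at h2
    exact h2
  have hzcof : ∀ x, x < zst → ∃ ξ, ξ < ν.ord ∧ x < z ξ := by
    intro x hx
    rw [← hζs] at hx
    obtain ⟨ξ, hξ, h2⟩ := (Ordinal.lt_bsup _).mp hx
    exact ⟨ξ, hξ, h2⟩
  have hzmono : ∀ ξ ξ', ξ ≤ ξ' → ξ' < ν.ord → z ξ ≤ z ξ' := by
    intro ξ ξ' h h'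
    have hclub := hCf αs hαsT₂.1.1
    have hξ'c : ξ' < αs.cof.ord := by rw [hcoford αs hαsT₂.1.1]; exact h'
    have hξc : ξ < αs.cof.ord := lt_of_le_of_lt h hξ'c
    rcases eq_or_lt_of_le (cpick13_mono hclub h hξ'c) with he | hlt2
    · simp only [hzdef, he]
      exact le_rfl
    · exact (hgmono αs hαsT₂.1 _ (cpick13_mem hclub hξc).1 _ (cpick13_mem hclub hξ'c).1
        hlt2).le
  have hψtot : ∀ x : Ordinal, ψ x < ν.ord := by
    intro x
    rcases Set.eq_empty_or_nonempty {ξ | ξ < ν.ord ∧ x < z ξ} with h | h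
    · simp only [hψdef, h]
      simpa using hν0
    · exact (csInf_mem h).1
  have hψmem : ∀ x, x < zst → ψ x < ν.ord ∧ x < z (ψ x) := by
    intro x hx
    obtain ⟨ξ, hξ, h2⟩ := hzcof x hx
    have hne : {ξ | ξ < ν.ord ∧ x < z ξ}.Nonempty := ⟨ξ, hξ, h2⟩
    exact csInf_mem hne
  have hψmono : ∀ x y, x ≤ y → y < zst → ψ x ≤ ψ y := by
    intro x y hxy hy
    obtain ⟨ξ, hξ, h2⟩ := hzcof y hy
    have hne : {ξ | ξ < ν.ord ∧ y < z ξ}.Nonempty := ⟨ξ, hξ, h2⟩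
    show sInf {ξ | ξ < ν.ord ∧ x < z ξ} ≤ sInf {ξ | ξ < ν.ord ∧ y < z ξ}
    apply csInf_le_csInf (OrderBot.bddBelow _) hne
    intro ξ' hξ'
    exact ⟨hξ'.1, lt_of_le_of_lt hxy hξ'.2⟩
  -- the coloring
  refine ⟨fun β => ψ (f β jst), fun β _ => hψtot _, ?_⟩
  apply statIn_mono13 ?_ hstat2
  intro α hα
  have hα₀ : α ∈ T₀ := hα.1.1
  have hclub := hCf α hα₀
  have hζα : Ordinal.bsup ν.ord (fun ξ _ => f (cpick13 (Cf α) α ξ) jst) = zst := hα.2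
  have hcofα : α.cof = ν := (hmemT₀ α hα₀).2.1
  have hℵα : Cardinal.aleph0 < α.cof := by rw [hcofα]; exact hνu
  have hαlim : Order.IsSuccLimit α := Ordinal.aleph0_le_cof.mp hℵα.le
  have hsub := hclub.1
  have hgα : ∀ γ ∈ Cf α, ∀ δ ∈ Cf α, γ < δ → f γ jst < f δ jst :=
    fun γ hγ δ hδ h2 => hgmono α hα.1 γ hγ δ hδ h2
  have hgzst : ∀ γ ∈ Cf α, f γ jst < zst := fun γ hγ => hζα ▸ hgZ α hα.1 γ hγ
  have hcofzst : ∀ x, x < zst → ∃ γ ∈ Cf α, x < f γ jst := by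
    intro x hx
    rw [← hζα] at hx
    obtain ⟨ξ, hξ, h2⟩ := (Ordinal.lt_bsup _).mp hx
    have hξ' : ξ < α.cof.ord := by rw [hcofα]; exact hξ
    exact ⟨cpick13 (Cf α) α ξ, (cpick13_mem hclub hξ').1, h2⟩
  set F : Ordinal → Ordinal := fun γ => sInf {γ' | γ' ∈ Cf α ∧ z (ψ (f γ jst)) < f γ' jst}
    with hFdef
  have hFne : ∀ γ ∈ Cf α, {γ' | γ' ∈ Cf α ∧ z (ψ (f γ jst)) < f γ' jst}.Nonempty := by
    intro γ hγ
    obtain ⟨γ', hγ', h2⟩ := hcofzst _ (hzlt _ (hψmem _ (hgzst γ hγ)).1)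
    exact ⟨γ', hγ', h2⟩
  have hFmem : ∀ γ ∈ Cf α, F γ ∈ Cf α ∧ z (ψ (f γ jst)) < f (F γ) jst := by
    intro γ hγ
    exact csInf_mem (hFne γ hγ)
  have hFmono : ∀ γ ∈ Cf α, ∀ γ₂ ∈ Cf α, γ ≤ γ₂ → F γ ≤ F γ₂ := by
    intro γ hγ γ₂ hγ₂ h
    have hgle : f γ jst ≤ f γ₂ jst := by
      rcases eq_or_lt_of_le h with rfl | h'
      · exact le_rfl
      · exact (hgα γ hγ γ₂ hγ₂ h').le
    have hψle : ψ (f γ jst) ≤ ψ (f γ₂ jst) := hψmono _ _ hgle (hgzst γ₂ hγ₂)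
    have hzle : z (ψ (f γ jst)) ≤ z (ψ (f γ₂ jst)) :=
      hzmono _ _ hψle (hψmem _ (hgzst γ₂ hγ₂)).1
    show sInf {γ' | γ' ∈ Cf α ∧ z (ψ (f γ jst)) < f γ' jst} ≤
      sInf {γ' | γ' ∈ Cf α ∧ z (ψ (f γ₂ jst)) < f γ' jst}
    apply csInf_le_csInf (OrderBot.bddBelow _) (hFne γ₂ hγ₂)
    intro x hx
    exact ⟨hx.1, lt_of_le_of_lt hzle hx.2⟩
  have hstep : ∀ δ < α, ∃ δ', δ < δ' ∧ δ' < α ∧ ∀ γ ∈ Cf α, γ < δ → F γ < δ' := by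
    intro δ hδ
    obtain ⟨σ, hσ, hδσ, hσα⟩ := hclub.2.2 δ hδ
    refine ⟨Order.succ (max (F σ) σ), ?_, ?_, ?_⟩
    · exact lt_of_lt_of_le (lt_of_lt_of_le hδσ (le_max_right _ _)) (Order.le_succ _)
    · exact hαlim.succ_lt (max_lt (hsub (hFmem σ hσ).1) hσα)
    · intro γ hγ hγδ
      exact lt_of_le_of_lt ((hFmono γ hγ σ hσ (hγδ.trans hδσ).le).trans (le_max_left _ _))
        (Order.lt_succ _)
  have hcclub : ClubIn {δ | δ < α ∧ 0 < δ ∧ ∀ γ ∈ Cf α, γ < δ → F γ < δ} α := by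
    refine ⟨fun x hx => hx.1, ?_, ?_⟩
    · intro β hβ h0 hu
      refine ⟨hβ, h0, ?_⟩
      intro γ hγ hγβ
      obtain ⟨δ, hδc, h1, h2⟩ := hu γ hγβ
      exact lt_trans (hδc.2.2 γ hγ h1) h2
    · intro β hβ
      obtain ⟨d, hβd, hdα, hd⟩ := chain13 hℵα hstep β hβ
      refine ⟨d, ⟨hdα, (_root_.zero_le (a := β)).trans_lt hβd, ?_⟩, hβd, hdα⟩
      intro γ hγ hγd
      obtain ⟨δ, δ', h1, h2, h3, hQ⟩ := hd γ hγd
      exact lt_trans (hQ γ hγ h1) h3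
  refine ⟨hα₀, {δ | δ < α ∧ 0 < δ ∧ ∀ γ ∈ Cf α, γ < δ → F γ < δ} ∩ Cf α,
    clubIn_inter13 hℵα hcclub hclub, ?_⟩
  intro x hx y hy hxy
  have hFx : F x < y := hy.1.2.2 x hx.2 hxy
  have hkey : z (ψ (f x jst)) < f y jst :=
    lt_trans (hFmem x hx.2).2 (hgα (F x) (hFmem x hx.2).1 y hy.2 hFx)
  show ψ (f x jst) < ψ (f y jst)
  by_contra hcon
  push_neg at hcon
  have h1 : f y jst < z (ψ (f y jst)) := (hψmem _ (hgzst y hy.2)).2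
  have h2 : z (ψ (f y jst)) ≤ z (ψ (f x jst)) :=
    hzmono _ _ hcon (hψmem _ (hgzst x hx.2)).1
  exact absurd (lt_trans (lt_of_lt_of_le h1 h2) hkey) (lt_irrefl _)
end

section
/- Suppose ν and λ are cardinals with ℵ₀ < cf(ν) = ν < cf(λ) and λ regular. Then SNR⁻(λ⁺, ν, E^{λ⁺}_ν) holds: for every stationary T₀ ⊆ E^{λ⁺}_ν there is a function φ : λ⁺ → ν such that for stationarily many α ∈ T₀ there is a club in α on which φ is strictly increasing. (Assume the existence of a partial square sequence ⟨C_α | α ∈ Γ⟩ on a subset Γ of acc(λ⁺) with T₁ := {α ∈ Γ ∩ T₀ | otp(C_α) = ν} stationary, coherent in the sense that C_ᾱ = C_α ∩ ᾱ for ᾱ ∈ acc(C_α).) -/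
open Cardinal Set Ordinal

universe u
lemma exists_enum (x : Set Ordinal.{u}) (b : Ordinal.{u}) (hx : x ⊆ Set.Iio b) :
    ∃ o : Ordinal.{u}, ∃ f : Ordinal.{u} → Ordinal.{u}, StrictMono f ∧ f '' Set.Iio o = x := by
  classical
  set s : Set Ordinal := x ∪ Set.Ici b with hs
  have hunb : ¬ BddAbove s := by
    rintro ⟨u, hu⟩
    have := hu (Set.mem_union_right _ (le_max_left b (u+1) : b ≤ max b (u+1)))
    have h2 := hu (Set.mem_union_right _ (le_refl b))
    have : max b (u+1) ≤ u := hu (Set.mem_union_right _ (le_max_left b (u+1)))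
    exact absurd ((le_max_right b (u+1)).trans this) (by simp)
  set f := Ordinal.enumOrd s with hf
  have hmono : StrictMono f := Ordinal.enumOrd_strictMono hunb
  have hone : {a | b ≤ f a}.Nonempty := ⟨b, Ordinal.le_enumOrd_self hunb⟩
  set o := sInf {a | b ≤ f a} with ho
  refine ⟨o, f, hmono, ?_⟩
  ext y; constructor
  · rintro ⟨a, ha, rfl⟩
    have h1 : ¬ b ≤ f a := fun h => (csInf_le' (s := {a | b ≤ f a}) h).not_gt ha
    have : f a ∈ s := Ordinal.enumOrd_mem hunb a
    rcases this with h | h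
    · exact h
    · exact absurd h h1
  · intro hy
    obtain ⟨a, ha⟩ := Ordinal.enumOrd_surjective hunb (Set.mem_union_left _ hy)
    refine ⟨a, ?_, ha⟩
    have hbo : b ≤ f o := csInf_mem hone
    have : f a < b := lt_of_le_of_lt (le_of_eq ha) (hx hy)
    by_contra hao
    exact absurd ((hbo.trans (hmono.monotone (not_lt.1 hao))).trans_lt this) (lt_irrefl b)

lemma witness_val {f : Ordinal → Ordinal} {o : Ordinal} {x : Set Ordinal}
    (hf : StrictMonoOn f (Set.Iio o)) (him : f '' Set.Iio o = x) {β : Ordinal} (hβ : β < o) :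
    f β = sInf (x \ f '' Set.Iio β) := by
  have hmem : f β ∈ x \ f '' Set.Iio β := by
    refine ⟨him ▸ Set.mem_image_of_mem f hβ, ?_⟩
    rintro ⟨δ, hδ, hδe⟩
    exact absurd hδe (ne_of_lt (hf (hδ.trans hβ) hβ hδ))
  refine le_antisymm (le_csInf ⟨_, hmem⟩ ?_) (csInf_le' hmem)
  rintro y ⟨hy, hy2⟩
  rw [← him] at hy
  obtain ⟨δ, hδ, rfl⟩ := hy
  rcases lt_or_ge δ β with h | h
  · exact absurd (Set.mem_image_of_mem f h) hy2
  · rcases eq_or_lt_of_le h with rfl | h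
    · exact le_rfl
    · exact (hf hβ hδ h).le

lemma witness_unique {f g : Ordinal → Ordinal} {o o' : Ordinal} {x : Set Ordinal}
    (hf : StrictMonoOn f (Set.Iio o)) (him : f '' Set.Iio o = x)
    (hg : StrictMonoOn g (Set.Iio o')) (him' : g '' Set.Iio o' = x) : o = o' := by
  have key : ∀ β, β < o → β < o' → f β = g β := by
    intro β
    induction β using Ordinal.induction with
    | h β IH =>
      intro hβ hβ'
      have himg : f '' Set.Iio β = g '' Set.Iio β :=
        Set.EqOn.image_eq (fun δ hδ => IH δ hδ (hδ.trans hβ) (hδ.trans hβ'))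
      rw [witness_val hf him hβ, witness_val hg him' hβ', himg]
  rcases lt_trichotomy o o' with h | h | h
  · exfalso
    have : g o ∈ x := him' ▸ Set.mem_image_of_mem g h
    rw [← him] at this
    obtain ⟨δ, hδ, hδe⟩ := this
    rw [key δ hδ (hδ.trans h)] at hδe
    exact absurd (hg.injOn (hδ.trans h) h hδe) (ne_of_lt hδ)
  · exact h
  · exfalso
    have : f o' ∈ x := him ▸ Set.mem_image_of_mem f h
    rw [← him'] at this
    obtain ⟨δ, hδ, hδe⟩ := this
    rw [← key δ (hδ.trans h) hδ] at hδe
    exact absurd (hf.injOn (hδ.trans h) h hδe) (ne_of_lt hδ)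

lemma otp_eq {f : Ordinal → Ordinal} {o : Ordinal} {x : Set Ordinal}
    (hf : StrictMonoOn f (Set.Iio o)) (him : f '' Set.Iio o = x) : otp x = o := by
  have hne : {o : Ordinal | ∃ f : Ordinal → Ordinal,
      StrictMonoOn f (Set.Iio o) ∧ f '' Set.Iio o = x}.Nonempty := ⟨o, f, hf, him⟩
  obtain ⟨g, hg, hgim⟩ := csInf_mem hne
  exact witness_unique hg hgim hf him

lemma otp_seg {f : Ordinal → Ordinal} {o : Ordinal} {x : Set Ordinal}
    (hf : StrictMonoOn f (Set.Iio o)) (him : f '' Set.Iio o = x) {γ : Ordinal} (hγ : γ < o) :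
    otp (x ∩ Set.Iio (f γ)) = γ := by
  refine otp_eq (f := f) (hf.mono (fun δ hδ => lt_trans hδ hγ)) ?_
  ext y; constructor
  · rintro ⟨δ, hδ, rfl⟩
    exact ⟨him ▸ Set.mem_image_of_mem f (hδ.trans hγ), hf (hδ.trans hγ) hγ hδ⟩
  · rintro ⟨hy, hy2⟩
    rw [← him] at hy
    obtain ⟨δ, hδ, rfl⟩ := hy
    exact ⟨δ, (hf.lt_iff_lt hδ hγ).1 hy2, rfl⟩

lemma statIn_mono {S S' : Set Ordinal} {α : Ordinal} (h : S ⊆ S') (hS : StatIn S α) :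
    StatIn S' α := fun C hC => (hS C hC).imp fun _ ⟨h1, h2⟩ => ⟨h h1, h2⟩

lemma accSet_club {C : Set Ordinal} {α : Ordinal} (hC : ClubIn C α)
    (hcof : Cardinal.aleph0 < α.cof) : ClubIn (accSet C) α := by
  obtain ⟨hsub, hcl, hunb⟩ := hC
  have hacc_sub : accSet C ⊆ C := fun β hβ => hβ.1
  refine ⟨fun β hβ => hsub (hacc_sub hβ), ?_, ?_⟩
  · intro β hβ h0 hu
    have huC : UnbIn C β := fun δ hδ => by
      obtain ⟨e, he, hde, heb⟩ := hu δ hδ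
      exact ⟨e, hacc_sub he, hde, heb⟩
    exact ⟨hcl β hβ h0 huC, h0, huC⟩
  · intro β hβ
    classical
    have hα0 : (0:Ordinal) < α := lt_of_le_of_lt (zero_le : (0:Ordinal) ≤ β) hβ
    set next : Ordinal → Ordinal := fun δ =>
      if h : δ < α then Classical.choose (hunb δ h) else 0 with hnext
    have hnextP : ∀ δ, δ < α → next δ ∈ C ∧ δ < next δ ∧ next δ < α := by
      intro δ h
      simp only [hnext, dif_pos h]
      obtain ⟨h1, h2, h3⟩ := Classical.choose_spec (hunb δ h)
      exact ⟨h1, h2, h3⟩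
    set g : ℕ → Ordinal := fun n => next^[n+1] β with hg
    have hgP : ∀ n, g n ∈ C ∧ g n < α ∧ β < g n := by
      intro n
      induction n with
      | zero =>
        obtain ⟨h1, h2, h3⟩ := hnextP β hβ
        exact ⟨h1, h3, h2⟩
      | succ n IH =>
        obtain ⟨h1, h2, h3⟩ := IH
        have : g (n+1) = next (g n) := by
          simp [hg, Function.iterate_succ_apply']
        obtain ⟨k1, k2, k3⟩ := hnextP (g n) h2
        rw [this]
        exact ⟨k1, k3, h3.trans k2⟩
    have hmono : ∀ n, g n < g (n+1) := by
      intro n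
      have : g (n+1) = next (g n) := by simp [hg, Function.iterate_succ_apply']
      rw [this]
      exact (hnextP (g n) (hgP n).2.1).2.1
    have hbdd : BddAbove (Set.range g) := Ordinal.bddAbove_of_small
    set γ := ⨆ n, g n with hγ
    have hγα' : (⨆ n, g n) < α :=
      Ordinal.iSup_lt_ord_lift (by simpa using hcof) (fun n => (hgP n).2.1)
    have hγα : γ < α := hγα'
    have hle : ∀ n, g n ≤ γ := fun n => le_ciSup hbdd n
    have hltγ : ∀ n, g n < γ := fun n => lt_of_lt_of_le (hmono n) (hle (n+1))
    have hβγ : β < γ := lt_of_lt_of_le (hgP 0).2.2 (hle 0)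
    have hunbγ : UnbIn C γ := by
      intro δ hδ
      rw [hγ, lt_ciSup_iff hbdd] at hδ
      obtain ⟨n, hn⟩ := hδ
      exact ⟨g n, (hgP n).1, hn, hltγ n⟩
    have h0γ : (0:Ordinal) < γ := lt_of_le_of_lt (zero_le : (0:Ordinal) ≤ β) hβγ
    exact ⟨γ, ⟨hcl γ hγα h0γ hunbγ, h0γ, hunbγ⟩, hβγ, hγα⟩

theorem statement14 (ν lam : Cardinal) (hνu : Cardinal.aleph0 < ν) (hνreg : ν.IsRegular)
    (hνlam : ν < lam.ord.cof) (hlam : lam.IsRegular)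
    (hsq : ∀ T₀ ⊆ Ecof (Order.succ lam).ord ν, StatIn T₀ (Order.succ lam).ord →
      ∃ Γ : Set Ordinal, ∃ C : Ordinal → Set Ordinal,
        Γ ⊆ {α | α < (Order.succ lam).ord ∧ Order.IsSuccLimit α} ∧
        (∀ α ∈ Γ, ClubIn (C α) α) ∧
        (∀ α ∈ Γ, ∀ β ∈ accSet (C α), β ∈ Γ ∧ C β = C α ∩ Set.Iio β) ∧
        StatIn {α ∈ Γ ∩ T₀ | otp (C α) = ν.ord} (Order.succ lam).ord) :
    SNRm (Order.succ lam).ord ν (Ecof (Order.succ lam).ord ν) := by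
  intro T₀ hT₀ hstat
  classical
  have hT₀' : T₀ ⊆ Ecof (Order.succ lam).ord ν := fun a ha => (hT₀ ha).2
  obtain ⟨Γ, C, hΓ, hclub, hcoh, hT₁⟩ := hsq T₀ hT₀' hstat
  set φ : Ordinal → Ordinal := fun β => if otp (C β) < ν.ord then otp (C β) else 0 with hφ
  have hν0 : (0:Ordinal) < ν.ord := by
    have h0 : (0:Cardinal) < ν := lt_of_lt_of_le Cardinal.aleph0_pos hνu.le
    calc (0:Ordinal) = (0:Cardinal).ord := by simp
    _ < ν.ord := Cardinal.ord_lt_ord.2 h0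
  refine ⟨φ, ?_, ?_⟩
  · intro β _
    simp only [hφ]
    split_ifs with h
    · exact h
    · exact hν0
  · refine statIn_mono ?_ hT₁
    rintro α ⟨⟨hαΓ, hαT₀⟩, hotp⟩
    have hcof : Cardinal.aleph0 < α.cof := by rw [(hT₀' hαT₀).2]; exact hνu
    refine ⟨hαT₀, accSet (C α), accSet_club (hclub α hαΓ) hcof, ?_⟩
    obtain ⟨o, f, hfmono, hfim⟩ := exists_enum (C α) α (hclub α hαΓ).1
    have hfmono' : StrictMonoOn f (Set.Iio o) := hfmono.strictMonoOn _
    have ho : o = ν.ord := by rw [← hotp, otp_eq hfmono' hfim]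
    have hval : ∀ β ∈ accSet (C α), ∃ γ < o, f γ = β ∧ φ β = γ := by
      intro β hβ
      obtain ⟨hβΓ, hCβ⟩ := hcoh α hαΓ β hβ
      have hβC : β ∈ C α := hβ.1
      rw [← hfim] at hβC
      obtain ⟨γ, hγ, rfl⟩ := hβC
      have hseg : otp (C α ∩ Set.Iio (f γ)) = γ := otp_seg hfmono' hfim hγ
      have hCv : otp (C (f γ)) = γ := by rw [hCβ, hseg]
      refine ⟨γ, hγ, rfl, ?_⟩
      simp only [hφ, hCv]
      rw [if_pos (ho ▸ hγ)]
    intro β hβ β' hβ' hlt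
    obtain ⟨γ, hγ, hfγ, hφγ⟩ := hval β hβ
    obtain ⟨γ', hγ', hfγ', hφγ'⟩ := hval β' hβ'
    rw [hφγ, hφγ']
    have hff : f γ < f γ' := by rw [hfγ, hfγ']; exact hlt
    exact hfmono.lt_iff_lt.1 hff
end

section
/- Suppose λ is a singular cardinal, f⃗ = ⟨f_β | β < λ⁺⟩ is a scale for λ in ∏_{i<cf(λ)} λ_i, ν is regular uncountable with ν ≠ cf(λ) and ν > cf(λ), S ⊆ λ⁺, and α is a good point of f⃗ with cf(α) = ν such that S ∩ α is stationary in α. Let e_α be an exact upper bound of f⃗↾α with cf(e_α(i)) = ν for all i ≥ k (where λ_k > ν). Then there exists i ∈ cf(λ) \ k such that, setting ε := e_α(i), for every γ < ε the set {β ∈ S ∩ α | γ ≤ f_β(i) < ε} is stationary in α. -/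
open Cardinal Set Ordinal

/-- Intersection of fewer than `cof α` many clubs in `α` is club in `α`. -/
lemma clubIn_iInter_aux {α o : Ordinal} (C : ∀ i, i < o → Set Ordinal)
    (h : ∀ i hi, ClubIn (C i hi) α) (hcard : o.card < α.cof)
    (hω : Cardinal.aleph0 < α.cof) (ho : 0 < o) :
    ClubIn {x | ∀ i (hi : i < o), x ∈ C i hi} α := by
  have hlim : Order.IsSuccLimit α := Ordinal.aleph0_le_cof.1 hω.le
  have hnext : ∀ i (hi : i < o) x, x < α → ∃ γ, γ ∈ C i hi ∧ x < γ ∧ γ < α := by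
    intro i hi x hx
    obtain ⟨γ, hγ, h1, h2⟩ := (h i hi).2.2 x hx
    exact ⟨γ, hγ, h1, h2⟩
  classical
  set F : Ordinal → Ordinal := fun x =>
    if hx : x < α then max (x + 1)
      (Ordinal.bsup o (fun i hi => (hnext i hi x hx).choose)) else 0 with hF
  have hF1 : ∀ x, x < α → x < F x := by
    intro x hx
    rw [hF]; simp only [dif_pos hx]
    exact lt_of_lt_of_le (lt_add_one x) (le_max_left _ _)
  have hF2 : ∀ x, x < α → F x < α := by
    intro x hx
    rw [hF]; simp only [dif_pos hx]
    refine max_lt ?_ (Ordinal.bsup_lt_ord hcard fun i hi => ?_)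
    · rw [Ordinal.add_one_eq_succ]; exact hlim.succ_lt hx
    · exact (hnext i hi x hx).choose_spec.2.2
  have hF3 : ∀ x (hx : x < α) i (hi : i < o),
      ∃ γ ∈ C i hi, x < γ ∧ γ ≤ F x := by
    intro x hx i hi
    refine ⟨(hnext i hi x hx).choose, (hnext i hi x hx).choose_spec.1,
      (hnext i hi x hx).choose_spec.2.1, ?_⟩
    rw [hF]; simp only [dif_pos hx]
    exact le_trans (Ordinal.le_bsup _ i hi) (le_max_right _ _)
  constructor
  · intro x hx
    exact (h 0 ho).1 (hx 0 ho)
  constructor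
  · intro β hβ h0 hunb i hi
    refine (h i hi).2.1 β hβ h0 ?_
    intro δ hδ
    obtain ⟨γ, hγ, h1, h2⟩ := hunb δ hδ
    exact ⟨γ, hγ i hi, h1, h2⟩
  · intro β hβ
    set s : ℕ → Ordinal := fun n => F^[n] β with hs
    have hsucc : ∀ n, s (n + 1) = F (s n) := by
      intro n; rw [hs]; simp [Function.iterate_succ_apply']
    have hsα : ∀ n, s n < α := by
      intro n; induction n with
      | zero => simpa [hs] using hβ
      | succ n ih => rw [hsucc]; exact hF2 _ ih
    have hsmono : ∀ n, s n < s (n + 1) := fun n => by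
      rw [hsucc]; exact hF1 _ (hsα n)
    set βω := ⨆ n, s n with hβω
    have hle : ∀ n, s n ≤ βω := fun n => Ordinal.le_iSup s n
    have hlt : ∀ n, s n < βω := fun n => lt_of_lt_of_le (hsmono n) (hle (n + 1))
    have hβωα : βω < α := by
      have h' : (⨆ n, s n) < α :=
        Ordinal.iSup_lt_ord_lift (c := α) (by simpa using hω) hsα
      rwa [← hβω] at h'
    have hββω : β < βω := by
      have : s 0 = β := by simp [hs]
      rw [← this]; exact hlt 0
    refine ⟨βω, ?_, hββω, hβωα⟩
    intro i hi
    refine (h i hi).2.1 βω hβωα (lt_of_le_of_lt (zero_le (a := β)) hββω) ?_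
    intro δ hδ
    have : ∃ n, δ < s n := by
      by_contra hcon
      push_neg at hcon
      exact absurd (Ordinal.iSup_le hcon) (not_le.2 hδ)
    obtain ⟨n, hn⟩ := this
    obtain ⟨γ, hγC, h1, h2⟩ := hF3 (s n) (hsα n) i hi
    refine ⟨γ, hγC, lt_trans hn h1, ?_⟩
    exact lt_of_le_of_lt (h2.trans_eq (hsucc n).symm) (hlt (n + 1))

/-- Intersection of two clubs is club (assuming uncountable cofinality). -/
lemma clubIn_inter {α : Ordinal} {C D : Set Ordinal} (hC : ClubIn C α) (hD : ClubIn D α)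
    (hω : Cardinal.aleph0 < α.cof) : ClubIn (C ∩ D) α := by
  classical
  have h2 : ((2 : Ordinal)).card < α.cof := by
    have : ((2 : Ordinal)).card = 2 := by simp
    rw [this]
    exact lt_trans (Cardinal.nat_lt_aleph0 2) hω
  have := clubIn_iInter_aux (fun i _ => if i = 0 then C else D)
    (fun i hi => by by_cases h : i = 0 <;> simp [h, hC, hD]) h2 hω (by norm_num)
  have heq : {x | ∀ i (hi : i < (2 : Ordinal)), x ∈ (if i = 0 then C else D)} = C ∩ D := by
    ext x
    constructor
    · intro hx
      have h0 := hx 0 (by norm_num)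
      have h1 := hx 1 (by norm_num)
      simp only [if_pos rfl] at h0
      simp only [if_neg one_ne_zero] at h1
      exact ⟨h0, h1⟩
    · rintro ⟨hxC, hxD⟩ i hi
      by_cases h : i = 0 <;> simp [h, hxC, hxD]
  rwa [heq] at this

/-- An interval `Ioo γ α` is club in a limit ordinal `α`. -/
lemma clubIn_Ioo {α γ : Ordinal} (hγ : γ < α) (hlim : Order.IsSuccLimit α) :
    ClubIn (Set.Ioo γ α) α := by
  refine ⟨fun x hx => hx.2, ?_, ?_⟩
  · intro β hβ h0 hunb
    obtain ⟨δ, hδ, _, _⟩ := hunb 0 h0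
    exact ⟨lt_trans hδ.1 ‹δ < β›, hβ⟩
  · intro β hβ
    refine ⟨max β γ + 1, ⟨?_, ?_⟩, ?_, ?_⟩
    · exact lt_of_le_of_lt (le_max_right β γ) (lt_add_one _)
    · rw [Ordinal.add_one_eq_succ]; exact hlim.succ_lt (max_lt hβ hγ)
    · exact lt_of_le_of_lt (le_max_left β γ) (lt_add_one _)
    · rw [Ordinal.add_one_eq_succ]; exact hlim.succ_lt (max_lt hβ hγ)

theorem statement15 (lam : Cardinal) (hlam : Cardinal.aleph0 ≤ lam) (hsing : ¬lam.IsRegular)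
    (lams : Ordinal → Cardinal) (f : Ordinal → Ordinal → Ordinal)
    (hscale : IsScale lam lams f)
    (ν : Cardinal) (hν : ν.IsRegular) (hνu : Cardinal.aleph0 < ν)
    (hcf : lam.ord.cof < ν)
    (S : Set Ordinal) (hS : S ⊆ Set.Iio (Order.succ lam).ord)
    (α : Ordinal) (hα : α < (Order.succ lam).ord) (hαcof : α.cof = ν)
    (hSstat : StatIn (S ∩ Set.Iio α) α)
    (k : Ordinal) (hk : k < lam.ord.cof.ord) (hkν : ν < lams k)
    (e : Ordinal → Ordinal)
    (heprod : ∀ i < lam.ord.cof.ord, e i < (lams i).ord)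
    (hecof : ∀ i, k ≤ i → i < lam.ord.cof.ord → (e i).cof = ν)
    (hub : ∀ γ < α, ∃ i < lam.ord.cof.ord, ∀ j, i ≤ j → j < lam.ord.cof.ord → f γ j < e j)
    (hexact : ∀ g : Ordinal → Ordinal, (∀ i < lam.ord.cof.ord, g i < (lams i).ord) →
      (∃ i < lam.ord.cof.ord, ∀ j, i ≤ j → j < lam.ord.cof.ord → g j < e j) →
      ∃ γ < α, ∃ i < lam.ord.cof.ord, ∀ j, i ≤ j → j < lam.ord.cof.ord → g j < f γ j) :
    ∃ i, k ≤ i ∧ i < lam.ord.cof.ord ∧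
      ∀ γ < e i, StatIn ({β ∈ S | γ ≤ f β i ∧ f β i < e i} ∩ Set.Iio α) α := by
  classical
  by_contra hcon
  push_neg at hcon
  -- extract, for each relevant i, a bad γ and a witnessing club
  have hbad : ∀ i, ∃ γ C, k ≤ i → i < lam.ord.cof.ord →
      γ < e i ∧ ClubIn C α ∧
        (({β ∈ S | γ ≤ f β i ∧ f β i < e i} ∩ Set.Iio α) ∩ C) = ∅ := by
    intro i
    by_cases hi : k ≤ i ∧ i < lam.ord.cof.ord
    · obtain ⟨γ, hγe, hnst⟩ := hcon i hi.1 hi.2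
      rw [StatIn] at hnst
      push_neg at hnst
      obtain ⟨C, hCclub, hCempty⟩ := hnst
      exact ⟨γ, C, fun _ _ => ⟨hγe, hCclub, hCempty⟩⟩
    · exact ⟨0, ∅, fun h1 h2 => absurd ⟨h1, h2⟩ hi⟩
  choose gam Cl hGC using hbad
  have hαcof' : Cardinal.aleph0 < α.cof := by rw [hαcof]; exact hνu
  have hαlim : Order.IsSuccLimit α := Ordinal.aleph0_le_cof.1 hαcof'.le
  -- the function g
  set g : Ordinal → Ordinal := fun i => if k ≤ i then gam i else 0 with hg
  have hgprod : ∀ i < lam.ord.cof.ord, g i < (lams i).ord := by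
    intro i hi
    rw [hg]
    by_cases hki : k ≤ i
    · simp only [if_pos hki]
      exact lt_trans ((hGC i hki hi).1) (heprod i hi)
    · simp only [if_neg hki]
      have : Cardinal.aleph0 ≤ lams i := (hscale.1 i hi).1
      calc (0 : Ordinal) < Cardinal.aleph0.ord := by
            rw [Cardinal.ord_aleph0]; exact Ordinal.omega0_pos
        _ ≤ (lams i).ord := Cardinal.ord_le_ord.2 this
  have hgdom : ∃ i < lam.ord.cof.ord, ∀ j, i ≤ j → j < lam.ord.cof.ord → g j < e j := by
    refine ⟨k, hk, fun j hkj hj => ?_⟩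
    rw [hg]; simp only [if_pos hkj]
    exact (hGC j hkj hj).1
  obtain ⟨γs, hγsα, i₀, hi₀, hdom⟩ := hexact g hgprod hgdom
  -- the big club
  have hcard : lam.ord.cof.ord.card < α.cof := by
    rw [Cardinal.card_ord, hαcof]; exact hcf
  have hD1 : ClubIn {x | ∀ i (hi : i < lam.ord.cof.ord),
      x ∈ (if k ≤ i then Cl i else Cl k)} α := by
    refine clubIn_iInter_aux _ (fun i hi => ?_) hcard hαcof'
      (lt_of_le_of_lt (zero_le (a := k)) hk)
    by_cases hki : k ≤ i
    · simp only [if_pos hki]; exact (hGC i hki hi).2.1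
    · simp only [if_neg hki]; exact (hGC k le_rfl hk).2.1
  have hD2 : ClubIn (Set.Ioo γs α) α := clubIn_Ioo hγsα hαlim
  obtain ⟨β, hβSα, hβD1, hβD2⟩ := hSstat _ (clubIn_inter hD1 hD2 hαcof')
  obtain ⟨hβS, hβα⟩ := hβSα
  have hβα' : (β : Ordinal) < (Order.succ lam).ord := lt_trans hβα hα
  -- scale eventual domination: f γs <* f β
  obtain ⟨i₁, hi₁, h6⟩ := hscale.2.2.2.2.2.1 γs (lt_trans hγsα hα) β hβα' hβD2.1
  -- f β <* e
  obtain ⟨i₂, hi₂, hub'⟩ := hub β hβα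
  set j := max i₀ (max i₁ (max i₂ k)) with hj
  have hjcof : j < lam.ord.cof.ord := max_lt hi₀ (max_lt hi₁ (max_lt hi₂ hk))
  have hkj : k ≤ j := le_trans (le_max_right i₂ k)
    (le_trans (le_max_right i₁ _) (le_max_right i₀ _))
  have hβmem : β ∈ ({β' ∈ S | gam j ≤ f β' j ∧ f β' j < e j} ∩ Set.Iio α) ∩ Cl j := by
    refine ⟨⟨⟨hβS, ?_, ?_⟩, hβα⟩, ?_⟩
    · have h1 : g j < f γs j := hdom j (le_max_left _ _) hjcof
      have h2 : f γs j < f β j := h6 j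
        (le_trans (le_max_left i₁ _) (le_trans (le_max_right i₀ _) le_rfl)) hjcof
      rw [hg] at h1; simp only [if_pos hkj] at h1
      exact le_of_lt (lt_trans h1 h2)
    · exact hub' j (le_trans (le_max_left i₂ k)
        (le_trans (le_max_right i₁ _) (le_max_right i₀ _))) hjcof
    · have := hβD1 j hjcof
      simpa only [if_pos hkj] using this
  have := (hGC j hkj hjcof).2.2
  rw [this] at hβmem
  exact hβmem
end
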